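/- Let b ≥ 2 be an integer. On the m = 0 axis the decimation map stays on that axis and its derivative at the fixed point equals b: for 0 ≤ k < 1 one has p(k,0) = q(k,0) = k/(1+k), hence p'(k,0) = q'(k,0) = (1/2)(1 − ((1−k)/(1+k))^b), so that m'(k,0) = 0 and k'(k,0) = p'/(1−p'); moreover the function k ↦ k'(k,0) (defined on [0,1), equal to 0 at k=0) has derivative b at k = 0 (derivative within [0,1)). -/

import Mathlib

/-- Transition probability `p = (S + sinh m)/(cosh m + S)` with `S = sqrt(sinh² m + k²)`. -/
noncomputable def pIsing (k m : ℝ) : ℝ :=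
  (Real.sqrt (Real.sinh m ^ 2 + k ^ 2) + Real.sinh m) /
    (Real.cosh m + Real.sqrt (Real.sinh m ^ 2 + k ^ 2))

/-- Transition probability `q = (S − sinh m)/(cosh m + S)` with `S = sqrt(sinh² m + k²)`. -/
noncomputable def qIsing (k m : ℝ) : ℝ :=
  (Real.sqrt (Real.sinh m ^ 2 + k ^ 2) - Real.sinh m) /
    (Real.cosh m + Real.sqrt (Real.sinh m ^ 2 + k ^ 2))

/-- Renormalized transition probability `p' = (p/(p+q)) (1 − (1−p−q)^b)`. -/
noncomputable def pRen (b : ℕ) (k m : ℝ) : ℝ :=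
  (pIsing k m / (pIsing k m + qIsing k m)) * (1 - (1 - pIsing k m - qIsing k m) ^ b)

/-- Renormalized transition probability `q' = (q/(p+q)) (1 − (1−p−q)^b)`. -/
noncomputable def qRen (b : ℕ) (k m : ℝ) : ℝ :=
  (qIsing k m / (pIsing k m + qIsing k m)) * (1 - (1 - pIsing k m - qIsing k m) ^ b)

/-- Renormalized Boltzmann factor `k' = sqrt(p'q'/((1−p')(1−q')))`. -/
noncomputable def kRen (b : ℕ) (k m : ℝ) : ℝ :=
  Real.sqrt (pRen b k m * qRen b k m / ((1 - pRen b k m) * (1 - qRen b k m)))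

/-- Renormalized magnetic field `m' = (1/2) log((1−q')/(1−p'))`. -/
noncomputable def mRen (b : ℕ) (k m : ℝ) : ℝ :=
  (1 / 2) * Real.log ((1 - qRen b k m) / (1 - pRen b k m))

lemma pIsing_zero (k : ℝ) (hk : 0 ≤ k) : pIsing k 0 = k / (1 + k) := by
  simp [pIsing, Real.sqrt_sq hk]

lemma qIsing_zero (k : ℝ) (hk : 0 ≤ k) : qIsing k 0 = k / (1 + k) := by
  simp [qIsing, Real.sqrt_sq hk]

lemma pRen_zero (b : ℕ) (k : ℝ) (hk : 0 ≤ k) (hk1 : k < 1) :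
    pRen b k 0 = (1 / 2) * (1 - ((1 - k) / (1 + k)) ^ b) := by
  have h1 : (0:ℝ) < 1 + k := by linarith
  have hp := pIsing_zero k hk
  have hq := qIsing_zero k hk
  have ht : 1 - k / (1 + k) - k / (1 + k) = (1 - k) / (1 + k) := by
    field_simp
    ring
  rcases eq_or_lt_of_le hk with h | h
  · subst h
    simp [pRen, hp, hq]
  · have hne : k / (1 + k) ≠ 0 := by positivity
    have h2 : k / (1 + k) / (k / (1 + k) + k / (1 + k)) = 1 / 2 := by
      rw [← two_mul, div_eq_div_iff (by positivity) two_ne_zero]; ring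
    rw [pRen, hp, hq, h2, ht]

lemma qRen_zero (b : ℕ) (k : ℝ) (hk : 0 ≤ k) (hk1 : k < 1) :
    qRen b k 0 = (1 / 2) * (1 - ((1 - k) / (1 + k)) ^ b) := by
  have : qRen b k 0 = pRen b k 0 := by
    rw [qRen, pRen, pIsing_zero k hk, qIsing_zero k hk]
  rw [this, pRen_zero b k hk hk1]

lemma pRen_bounds (b : ℕ) (k : ℝ) (hk : 0 ≤ k) (hk1 : k < 1) :
    0 ≤ pRen b k 0 ∧ pRen b k 0 < 1 := by
  rw [pRen_zero b k hk hk1]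
  have h1 : (0:ℝ) < 1 + k := by linarith
  have ht0 : 0 ≤ (1 - k) / (1 + k) := div_nonneg (by linarith) (by linarith)
  have ht1 : (1 - k) / (1 + k) ≤ 1 := by
    rw [div_le_one h1]; linarith
  have h2 : ((1 - k) / (1 + k)) ^ b ≤ 1 := pow_le_one₀ ht0 ht1
  have h3 : 0 ≤ ((1 - k) / (1 + k)) ^ b := by positivity
  refine ⟨by nlinarith, by nlinarith⟩

lemma mRen_zero (b : ℕ) (k : ℝ) (hk : 0 ≤ k) (hk1 : k < 1) :
    mRen b k 0 = 0 := by
  have hpq : qRen b k 0 = pRen b k 0 := by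
    rw [qRen_zero b k hk hk1, pRen_zero b k hk hk1]
  have hne : 1 - pRen b k 0 ≠ 0 := by
    have := (pRen_bounds b k hk hk1).2; intro h; linarith [this]
  rw [mRen, hpq, div_self hne, Real.log_one, mul_zero]

lemma kRen_zero (b : ℕ) (k : ℝ) (hk : 0 ≤ k) (hk1 : k < 1) :
    kRen b k 0 = pRen b k 0 / (1 - pRen b k 0) := by
  have hpq : qRen b k 0 = pRen b k 0 := by
    rw [qRen_zero b k hk hk1, pRen_zero b k hk hk1]
  obtain ⟨h0, h1⟩ := pRen_bounds b k hk hk1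
  have hne : (0:ℝ) < 1 - pRen b k 0 := by linarith
  have : pRen b k 0 * qRen b k 0 / ((1 - pRen b k 0) * (1 - qRen b k 0))
      = (pRen b k 0 / (1 - pRen b k 0)) ^ 2 := by
    rw [hpq, div_pow, sq, sq]
  rw [kRen, this, Real.sqrt_sq (by positivity)]

lemma hasDerivAt_formula (b : ℕ) :
    HasDerivAt (fun k : ℝ =>
      (1/2) * (1 - ((1-k)/(1+k))^b) / (1 - (1/2) * (1 - ((1-k)/(1+k))^b))) (b : ℝ) 0 := by
  have ht : HasDerivAt (fun k : ℝ => (1-k)/(1+k)) (-2) 0 := by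
    have h1 : HasDerivAt (fun k : ℝ => 1 - k) (-1) 0 := by
      simpa using (hasDerivAt_id (0:ℝ)).const_sub (1:ℝ)
    have h2 : HasDerivAt (fun k : ℝ => 1 + k) 1 0 := by
      simpa using (hasDerivAt_id (0:ℝ)).const_add (1:ℝ)
    have h3 := h1.div h2 (by norm_num)
    refine h3.congr_deriv ?_
    norm_num
  have htb : HasDerivAt (fun k : ℝ => ((1-k)/(1+k))^b) (-2*b) 0 := by
    have h3 := ht.pow b
    refine h3.congr_deriv ?_
    norm_num
    ring
  have hP : HasDerivAt (fun k : ℝ => (1/2)*(1 - ((1-k)/(1+k))^b)) (b : ℝ) 0 := by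
    have h3 := ((hasDerivAt_const (0:ℝ) (1:ℝ)).sub htb).const_mul (1/2:ℝ)
    refine h3.congr_deriv ?_
    ring
  have hden : (1:ℝ) - (1/2)*(1 - ((1-(0:ℝ))/(1+0))^b) ≠ 0 := by norm_num
  have h4 := hP.div ((hasDerivAt_const (0:ℝ) (1:ℝ)).sub hP) hden
  refine h4.congr_deriv ?_
  norm_num

/-- **Decimation on the `m = 0` axis.**  For blocking factor `b ≥ 2` and `0 ≤ k < 1`:
`p(k,0) = q(k,0) = k/(1+k)`, hence `p'(k,0) = q'(k,0) = (1/2)(1 − ((1−k)/(1+k))^b)`,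
so `m'(k,0) = 0` and `k'(k,0) = p'/(1−p')`; moreover `k ↦ k'(k,0)` has derivative `b`
at `k = 0` within `[0,1)`. -/
theorem decimation_on_m_axis (b : ℕ) (hb : 2 ≤ b) :
    (∀ k : ℝ, 0 ≤ k → k < 1 →
      pIsing k 0 = k / (1 + k) ∧ qIsing k 0 = k / (1 + k) ∧
      pRen b k 0 = (1 / 2) * (1 - ((1 - k) / (1 + k)) ^ b) ∧
      qRen b k 0 = (1 / 2) * (1 - ((1 - k) / (1 + k)) ^ b) ∧
      mRen b k 0 = 0 ∧
      kRen b k 0 = pRen b k 0 / (1 - pRen b k 0)) ∧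
    HasDerivWithinAt (fun k : ℝ => kRen b k 0) (b : ℝ) (Set.Ico 0 1) 0 := by
  constructor
  · intro k hk hk1
    exact ⟨pIsing_zero k hk, qIsing_zero k hk, pRen_zero b k hk hk1,
      qRen_zero b k hk hk1, mRen_zero b k hk hk1, kRen_zero b k hk hk1⟩
  · have hmem : (0:ℝ) ∈ Set.Ico (0:ℝ) 1 := by constructor <;> norm_num
    have heq : ∀ x ∈ Set.Ico (0:ℝ) 1, kRen b x 0 =
        (1/2) * (1 - ((1-x)/(1+x))^b) / (1 - (1/2) * (1 - ((1-x)/(1+x))^b)) := by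
      intro x hx
      rw [kRen_zero b x hx.1 hx.2, pRen_zero b x hx.1 hx.2]
    exact ((hasDerivAt_formula b).hasDerivWithinAt).congr heq (heq 0 hmem)
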